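/- Let 𝒫 be a nonempty set of probability measures, 𝔼[X] := sup_{P∈𝒫} E_P[X] for integrable measurable X, and suppose (Xₙ) is a sequence of measurable functions with 𝔼[|Xₙ − X|^p] → 0 for some p > 0. Then there is a subsequence (X_{n_k}) converging to X quasi-surely, i.e., outside a set A with sup_{P∈𝒫} P(A) = 0. -/

import Mathlib

open MeasureTheory Filter
open scoped ENNReal Topology

theorem qs_convergent_subsequence_of_Lp_convergence
    {Ω : Type*} [MeasurableSpace Ω]
    (S : Set (Measure Ω)) (hne : S.Nonempty)
    (hprob : ∀ P ∈ S, IsProbabilityMeasure P)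
    (X : Ω → ℝ) (hX : Measurable X)
    (Xn : ℕ → Ω → ℝ) (hXn : ∀ n, Measurable (Xn n))
    (p : ℝ) (hp : 0 < p)
    (hconv : Tendsto
      (fun n => ⨆ P ∈ S, ∫⁻ ω, ENNReal.ofReal |Xn n ω - X ω| ^ p ∂P)
      atTop (nhds 0)) :
    ∃ φ : ℕ → ℕ, StrictMono φ ∧
      ∃ A : Set Ω, MeasurableSet A ∧ (⨆ P ∈ S, P A) = 0 ∧
        ∀ ω ∉ A, Tendsto (fun k => Xn (φ k) ω) atTop (nhds (X ω)) := by
  set f : ℕ → ℝ≥0∞ := fun n => ⨆ P ∈ S, ∫⁻ ω, ENNReal.ofReal |Xn n ω - X ω| ^ p ∂P with hf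
  set ε : ℕ → ℝ := fun k => (1/2 : ℝ) ^ k with hε
  have hεpos : ∀ k, 0 < ε k := fun k => by positivity
  set b : ℕ → ℝ≥0∞ := fun k => ENNReal.ofReal (ε k) ^ p * ENNReal.ofReal (ε k) with hb
  have hbpos : ∀ k, 0 < b k := fun k => by
    apply ENNReal.mul_pos
    · exact (ENNReal.rpow_pos (ENNReal.ofReal_pos.2 (hεpos k)) ENNReal.ofReal_ne_top).ne'
    · exact (ENNReal.ofReal_pos.2 (hεpos k)).ne'
  -- extract subsequence
  obtain ⟨φ, hφ, hφk⟩ : ∃ φ : ℕ → ℕ, StrictMono φ ∧ ∀ k, f (φ k) ≤ b k := by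
    refine extraction_forall_of_eventually (P := fun k n => f n ≤ b k) fun k => ?_
    have := hconv.eventually_lt_const (hbpos k)
    exact this.mono fun n hn => hn.le
  refine ⟨φ, hφ, ?_⟩
  set B : ℕ → Set Ω := fun k => {ω | ε k ≤ |Xn (φ k) ω - X ω|} with hB
  have hBmeas : ∀ k, MeasurableSet (B k) := fun k =>
    measurableSet_le measurable_const ((hXn (φ k)).sub hX).abs
  -- Chebyshev: P (B k) ≤ ofReal (ε k)
  have hcheb : ∀ k, ∀ P ∈ S, P (B k) ≤ ENNReal.ofReal (ε k) := by
    intro k P hP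
    have hint : ∫⁻ ω, ENNReal.ofReal |Xn (φ k) ω - X ω| ^ p ∂P ≤ b k :=
      le_trans (le_iSup₂ (f := fun P (_ : P ∈ S) =>
        ∫⁻ ω, ENNReal.ofReal |Xn (φ k) ω - X ω| ^ p ∂P) P hP) (hφk k)
    have hmeasg : Measurable fun ω => ENNReal.ofReal |Xn (φ k) ω - X ω| ^ p :=
      (ENNReal.measurable_ofReal.comp ((hXn (φ k)).sub hX).abs).pow_const p
    have hsub : B k ⊆ {ω | ENNReal.ofReal (ε k) ^ p ≤ ENNReal.ofReal |Xn (φ k) ω - X ω| ^ p} := by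
      intro ω hω
      exact ENNReal.rpow_le_rpow (ENNReal.ofReal_le_ofReal hω) hp.le
    have h1 : ENNReal.ofReal (ε k) ^ p * P (B k) ≤ b k := by
      calc ENNReal.ofReal (ε k) ^ p * P (B k)
          ≤ ENNReal.ofReal (ε k) ^ p *
            P {ω | ENNReal.ofReal (ε k) ^ p ≤ ENNReal.ofReal |Xn (φ k) ω - X ω| ^ p} :=
            mul_le_mul_right (measure_mono hsub) _
        _ ≤ ∫⁻ ω, ENNReal.ofReal |Xn (φ k) ω - X ω| ^ p ∂P :=
            mul_meas_ge_le_lintegral hmeasg _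
        _ ≤ b k := hint
    have h0 : ENNReal.ofReal (ε k) ^ p ≠ 0 :=
      (ENNReal.rpow_pos (ENNReal.ofReal_pos.2 (hεpos k)) ENNReal.ofReal_ne_top).ne'
    have htop : ENNReal.ofReal (ε k) ^ p ≠ ⊤ :=
      ENNReal.rpow_ne_top_of_nonneg hp.le ENNReal.ofReal_ne_top
    rwa [hb, ENNReal.mul_le_mul_iff_right h0 htop] at h1
  -- sum finite
  have htsum : ∀ P ∈ S, ∑' k, P (B k) ≠ ∞ := by
    intro P hP
    have h1 : ∑' k, P (B k) ≤ ∑' k, ENNReal.ofReal (1/2 : ℝ) ^ k := by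
      apply ENNReal.tsum_le_tsum
      intro k
      refine (hcheb k P hP).trans_eq ?_
      rw [hε, ENNReal.ofReal_pow (by norm_num)]
    have h2 : ∑' k, ENNReal.ofReal (1/2 : ℝ) ^ k ≠ ∞ := by
      rw [ENNReal.tsum_geometric]
      have hr : ENNReal.ofReal (1/2 : ℝ) < 1 := by
        rw [← ENNReal.ofReal_one]
        exact (ENNReal.ofReal_lt_ofReal_iff (by norm_num)).2 (by norm_num)
      exact ENNReal.inv_ne_top.2 (tsub_pos_of_lt hr).ne'
    exact (h1.trans_lt (lt_top_iff_ne_top.2 h2)).ne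
  refine ⟨limsup B atTop, MeasurableSet.measurableSet_limsup hBmeas, ?_, ?_⟩
  · refine le_antisymm (iSup₂_le fun P hP => ?_) zero_le
    exact (measure_limsup_atTop_eq_zero (htsum P hP)).le
  · intro ω hω
    rw [mem_limsup_iff_frequently_mem, not_frequently] at hω
    rw [eventually_atTop] at hω
    obtain ⟨N, hN⟩ := hω
    rw [tendsto_iff_dist_tendsto_zero]
    have hub : ∀ᶠ k in atTop, dist (Xn (φ k) ω) (X ω) ≤ (1/2 : ℝ) ^ k := by
      refine eventually_atTop.2 ⟨N, fun k hk => ?_⟩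
      have := hN k hk
      rw [hB, Set.mem_setOf_eq, not_le] at this
      rw [Real.dist_eq]
      exact this.le
    exact squeeze_zero' (Eventually.of_forall fun k => dist_nonneg) hub
      (tendsto_pow_atTop_nhds_zero_of_lt_one (by norm_num) (by norm_num))
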